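/- arXiv:1812.08485 — 3 statements merged into one kernel-verified Lean document; each statement's English description precedes it below -/
import Mathlib

section
/- Let E be a real inner product space, f : E → ℝ convex and differentiable with L-Lipschitz gradient (L > 0), with nonempty minimizer set Ω and f* = min f. Let γ ∈ (0,1], C₂ ∈ (0, (2−γ)/L], C₁ ≥ C₂, and suppose the iterates x_{k+1} = x_k − α_k ∇f(x_k) satisfy α_k ∈ [C₂, C₁] and f(x_{k+1}) ≤ f(x_k) − (γ α_k / 2) ‖∇f(x_k)‖² for all k. Then k·(f(x_k) − f*) → 0 as k → ∞; that is, f(x_k) − f* = o(1/k). -/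
open Filter Finset

/-- If a nonnegative antitone sequence is summable, then `n * a n → 0`. -/
lemma aux_nat_mul_tendsto_zero {a : ℕ → ℝ} (ha : ∀ n, 0 ≤ a n) (hmono : Antitone a)
    (hsum : Summable a) :
    Tendsto (fun n : ℕ => (n : ℝ) * a n) atTop (nhds 0) := by
  have hs := hsum.hasSum.tendsto_sum_nat
  have hhalf : Tendsto (fun n : ℕ => n / 2) atTop atTop :=
    tendsto_atTop_atTop.2 fun b => ⟨2 * b, fun n hn => by omega⟩
  have hs2 := hs.comp hhalf
  have hdiff : Tendsto
      (fun n : ℕ => 2 * ((∑ i ∈ range n, a i) - ∑ i ∈ range (n / 2), a i))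
      atTop (nhds 0) := by
    have h := hs.sub hs2
    simp only [Function.comp] at h
    simpa using h.const_mul 2
  refine squeeze_zero (fun n => mul_nonneg (Nat.cast_nonneg n) (ha n)) (fun n => ?_) hdiff
  have hcard : ((n - n / 2 : ℕ) : ℝ) * a n ≤ ∑ i ∈ Finset.Ico (n / 2) n, a i := by
    have h := Finset.card_nsmul_le_sum (Finset.Ico (n / 2) n) a (a n)
      (fun i hi => hmono (Finset.mem_Ico.mp hi).2.le)
    simpa [Nat.card_Ico, nsmul_eq_mul] using h
  have hico : ∑ i ∈ Finset.Ico (n / 2) n, a i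
      = (∑ i ∈ range n, a i) - ∑ i ∈ range (n / 2), a i :=
    Finset.sum_Ico_eq_sub _ (Nat.div_le_self n 2)
  have h1 : (n : ℝ) ≤ 2 * ((n - n / 2 : ℕ) : ℝ) := by
    have : n ≤ 2 * (n - n / 2) := by omega
    exact_mod_cast this
  calc (n : ℝ) * a n ≤ 2 * ((n - n / 2 : ℕ) : ℝ) * a n :=
        mul_le_mul_of_nonneg_right h1 (ha n)
    _ ≤ 2 * ∑ i ∈ Finset.Ico (n / 2) n, a i := by
        rw [mul_assoc]; exact mul_le_mul_of_nonneg_left hcard (by norm_num)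
    _ = 2 * ((∑ i ∈ range n, a i) - ∑ i ∈ range (n / 2), a i) := by rw [hico]

/-- Gradient inequality for convex differentiable functions. -/
lemma convex_grad_ineq {E : Type*} [NormedAddCommGroup E] [InnerProductSpace ℝ E]
    {f : E → ℝ} (hconv : ConvexOn ℝ Set.univ f) {φ : E →L[ℝ] ℝ} {a : E}
    (h : HasFDerivAt f φ a) (b : E) : f a + φ (b - a) ≤ f b := by
  have hcurve : HasDerivAt (fun t : ℝ => t • (b - a) + a) (b - a) (0 : ℝ) := by
    simpa using ((hasDerivAt_id (0 : ℝ)).smul_const (b - a)).add_const a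
  have hc0 : (fun t : ℝ => t • (b - a) + a) 0 = a := by simp
  have hg : HasDerivAt (f ∘ fun t : ℝ => t • (b - a) + a) (φ (b - a)) 0 := by
    rw [← hc0] at h
    simpa using h.comp_hasDerivAt (0 : ℝ) hcurve
  have hgc : ConvexOn ℝ (Set.univ : Set ℝ) (f ∘ fun t : ℝ => t • (b - a) + a) := by
    have h2 := hconv.comp_affineMap (AffineMap.lineMap a b)
    rw [Set.preimage_univ] at h2
    have hfun : (f ∘ (AffineMap.lineMap a b) : ℝ → ℝ)
        = (f ∘ fun t : ℝ => t • (b - a) + a) := by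
      funext t; simp only [Function.comp, AffineMap.lineMap_apply_module]
      congr 1
      module
    rwa [hfun] at h2
  have hslope := hgc.le_slope_of_hasDerivAt (Set.mem_univ (0:ℝ)) (Set.mem_univ (1:ℝ))
    one_pos hg
  rw [slope_def_field] at hslope
  simp only [Function.comp_apply, one_smul, zero_smul, zero_add] at hslope
  have hba : f (b - a + a) = f b := by norm_num
  rw [hba] at hslope
  have h2 : φ (b - a) ≤ f b - f a := by
    simpa [div_one] using hslope
  linarith

/-- **Theorem 2 of the paper.** Gradient descent with step sizes
`α_k ∈ [C₂, C₁]`, `C₂ ∈ (0, (2−γ)/L]`, satisfying the sufficient decrease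
condition, achieves `f(x_k) − f* = o(1/k)`. -/
theorem gradient_descent_line_search_o_one_div_k
    {E : Type*} [NormedAddCommGroup E] [InnerProductSpace ℝ E]
    (f : E → ℝ) (f' : E → E) (L : ℝ) (hL : 0 < L)
    (hconv : ConvexOn ℝ Set.univ f)
    (hderiv : ∀ y, HasFDerivAt f (innerSL ℝ (f' y)) y)
    (hlip : ∀ y z, ‖f' y - f' z‖ ≤ L * ‖y - z‖)
    (xstar : E) (hxstar : ∀ y, f xstar ≤ f y)
    (γ C₁ C₂ : ℝ) (hγ0 : 0 < γ) (hγ1 : γ ≤ 1)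
    (hC₂0 : 0 < C₂) (hC₂L : C₂ ≤ (2 - γ) / L) (hC₁ : C₂ ≤ C₁)
    (α : ℕ → ℝ) (hα : ∀ k, α k ∈ Set.Icc C₂ C₁)
    (x : ℕ → E) (hx : ∀ k, x (k + 1) = x k - α k • f' (x k))
    (hdec : ∀ k, f (x (k + 1)) ≤ f (x k) - γ * α k / 2 * ‖f' (x k)‖ ^ 2) :
    Filter.Tendsto (fun k : ℕ => (k : ℝ) * (f (x k) - f xstar))
      Filter.atTop (nhds 0) := by
  obtain ⟨δ, hδ⟩ : ∃ δ : ℕ → ℝ, δ = fun k => f (x k) - f xstar := ⟨_, rfl⟩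
  obtain ⟨D, hD⟩ : ∃ D : ℕ → ℝ, D = fun k => ‖x k - xstar‖ ^ 2 := ⟨_, rfl⟩
  have hδ0 : ∀ k, 0 ≤ δ k := fun k => by rw [hδ]; exact sub_nonneg.2 (hxstar _)
  have hαpos : ∀ k, 0 < α k := fun k => lt_of_lt_of_le hC₂0 (hα k).1
  have hstep : ∀ k, δ (k + 1) ≤ δ k - γ * α k / 2 * ‖f' (x k)‖ ^ 2 := fun k => by
    have h := hdec k; rw [hδ]; simp only; linarith
  have hanti : Antitone δ := antitone_nat_of_succ_le fun k => by
    have h1 : 0 ≤ γ * α k / 2 * ‖f' (x k)‖ ^ 2 :=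
      mul_nonneg (div_nonneg (mul_nonneg hγ0.le (hαpos k).le) (by norm_num)) (sq_nonneg _)
    linarith [hstep k]
  -- convexity inequality
  have hcvx : ∀ k, δ k ≤ (inner ℝ (f' (x k)) (x k - xstar) : ℝ) := fun k => by
    have h := convex_grad_ineq hconv (hderiv (x k)) xstar
    rw [innerSL_apply_apply] at h
    have h2 : (inner ℝ (f' (x k)) (xstar - x k) : ℝ)
        = -(inner ℝ (f' (x k)) (x k - xstar) : ℝ) := by
      rw [← inner_neg_right]; congr 1; abel
    rw [h2] at h
    rw [hδ]; simp only; linarith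
  -- per-step inequality
  have hkey : ∀ k, 2 * C₂ * δ k ≤ (D k - D (k + 1)) + 2 * C₁ / γ * (δ k - δ (k + 1)) := by
    intro k
    have hexp : D (k + 1) = D k - 2 * (α k * (inner ℝ (f' (x k)) (x k - xstar) : ℝ))
        + α k ^ 2 * ‖f' (x k)‖ ^ 2 := by
      rw [hD]; simp only [hx k]
      have hre : x k - α k • f' (x k) - xstar = (x k - xstar) - α k • f' (x k) := by abel
      rw [hre, norm_sub_sq_real, real_inner_smul_right, norm_smul, real_inner_comm]
      simp only [mul_pow, Real.norm_eq_abs, sq_abs]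
    have hg2 : α k * ‖f' (x k)‖ ^ 2 ≤ 2 / γ * (δ k - δ (k + 1)) := by
      have h := hstep k
      rw [div_mul_eq_mul_div, le_div_iff₀ hγ0]
      nlinarith [h]
    have hcv := hcvx k
    have hαk := hα k
    have h1 : 2 * C₂ * δ k ≤ 2 * (α k * (inner ℝ (f' (x k)) (x k - xstar) : ℝ)) := by
      nlinarith [hδ0 k, hαk.1, hcv, hαpos k]
    have h2 : α k ^ 2 * ‖f' (x k)‖ ^ 2 ≤ 2 * C₁ / γ * (δ k - δ (k + 1)) := by
      have hn : 0 ≤ ‖f' (x k)‖ ^ 2 := sq_nonneg _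
      have hstep2 : α k * (α k * ‖f' (x k)‖ ^ 2) ≤ C₁ * (α k * ‖f' (x k)‖ ^ 2) :=
        mul_le_mul_of_nonneg_right hαk.2 (mul_nonneg (hαpos k).le hn)
      calc α k ^ 2 * ‖f' (x k)‖ ^ 2 = α k * (α k * ‖f' (x k)‖ ^ 2) := by ring
        _ ≤ C₁ * (α k * ‖f' (x k)‖ ^ 2) := hstep2
        _ ≤ C₁ * (2 / γ * (δ k - δ (k + 1))) :=
            mul_le_mul_of_nonneg_left hg2 (le_trans hC₂0.le hC₁)
        _ = 2 * C₁ / γ * (δ k - δ (k + 1)) := by ring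
    linarith [hexp]
  -- summability
  have hsumbd : ∀ n, ∑ k ∈ range n, δ k ≤ (D 0 + 2 * C₁ / γ * δ 0) / (2 * C₂) := by
    intro n
    have hB : 2 * C₂ * ∑ k ∈ range n, δ k ≤ D 0 + 2 * C₁ / γ * δ 0 := by
      have hsum : 2 * C₂ * ∑ k ∈ range n, δ k
          ≤ (D 0 - D n) + 2 * C₁ / γ * (δ 0 - δ n) := by
        calc 2 * C₂ * ∑ k ∈ range n, δ k = ∑ k ∈ range n, 2 * C₂ * δ k := by
              rw [Finset.mul_sum]
          _ ≤ ∑ k ∈ range n, ((D k - D (k + 1)) + 2 * C₁ / γ * (δ k - δ (k + 1))) :=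
              Finset.sum_le_sum fun k _ => hkey k
          _ = (D 0 - D n) + 2 * C₁ / γ * (δ 0 - δ n) := by
              rw [Finset.sum_add_distrib, Finset.sum_range_sub' D, ← Finset.mul_sum,
                Finset.sum_range_sub' δ]
      have hDn : 0 ≤ D n := by rw [hD]; exact sq_nonneg _
      have hc : 0 ≤ 2 * C₁ / γ * δ n :=
        mul_nonneg (div_nonneg (by linarith) hγ0.le) (hδ0 n)
      linarith
    rw [le_div_iff₀ (by positivity : (0:ℝ) < 2 * C₂)]
    linarith
  have hsummable : Summable δ := summable_of_sum_range_le hδ0 hsumbd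
  have hfin := aux_nat_mul_tendsto_zero hδ0 hanti hsummable
  have heq : (fun k : ℕ => (k : ℝ) * (f (x k) - f xstar)) = fun n : ℕ => (n : ℝ) * δ n := by
    funext n; rw [hδ]
  rw [heq]
  exact hfin
end

section
/- Let f : ℝⁿ → ℝ be convex and differentiable with L-Lipschitz gradient (L > 0), with nonempty minimizer set Ω and f* = min f. Let γ ∈ (0,1], C₂ ∈ (0, (2−γ)/L], C₁ ≥ C₂, and suppose x_{k+1} = x_k − α_k ∇f(x_k) with α_k ∈ [C₂, C₁] and f(x_{k+1}) ≤ f(x_k) − (γ α_k / 2) ‖∇f(x_k)‖² for all k. Then dist(x_k, Ω) → 0 as k → ∞. -/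
open InnerProductSpace Filter

lemma convex_grad_ineq_s8 {E : Type*} [NormedAddCommGroup E] [InnerProductSpace ℝ E] [CompleteSpace E]
    {f : E → ℝ} (hconv : ConvexOn ℝ Set.univ f) {g x : E}
    (hg : HasGradientAt f g x) (y : E) :
    f x + ⟪g, y - x⟫_ℝ ≤ f y := by
  set v := y - x with hv
  have h1 : HasDerivAt (fun t : ℝ => x + t • v) v 0 := by
    simpa using ((hasDerivAt_id (0:ℝ)).smul_const v).const_add x
  have hF : HasFDerivAt f (toDual ℝ E g) x := hasGradientAt_iff_hasFDerivAt.mp hg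
  have hd : HasDerivAt (fun t : ℝ => f (x + t • v)) ⟪g, v⟫_ℝ 0 := by
    have h2 : HasFDerivAt f (toDual ℝ E g) (x + (0:ℝ) • v) := by simpa using hF
    have h3 := h2.comp_hasDerivAt 0 h1
    simp at h3
    exact h3
  rw [hasDerivAt_iff_tendsto_slope] at hd
  have hd' : Filter.Tendsto (slope (fun t : ℝ => f (x + t • v)) 0) (nhdsWithin 0 (Set.Ioi 0))
      (nhds ⟪g, v⟫_ℝ) :=
    hd.mono_left (nhdsWithin_mono _ (fun t ht => ne_of_gt ht))
  have hle : ⟪g, v⟫_ℝ ≤ f y - f x := by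
    refine le_of_tendsto hd' ?_
    filter_upwards [Ioc_mem_nhdsGT_of_mem (Set.mem_Ico.mpr ⟨le_refl 0, zero_lt_one⟩)] with t ht
    have ht0 : (0:ℝ) < t := ht.1
    have hconvex : f (x + t • v) ≤ (1 - t) * f x + t * f y := by
      have := hconv.2 (Set.mem_univ x) (Set.mem_univ y) (by linarith [ht.2] : (0:ℝ) ≤ 1 - t) ht0.le
        (by ring)
      calc f (x + t • v) = f ((1 - t) • x + t • y) := by
            congr 1
            rw [hv]; module
        _ ≤ (1 - t) * f x + t * f y := this
    have ht1 : t ≤ 1 := ht.2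
    have key : f (x + t • v) - f x ≤ t * (f y - f x) := by nlinarith
    calc slope (fun t : ℝ => f (x + t • v)) 0 t
        = (f (x + t • v) - f x) / t := by simp [slope_def_field]
      _ ≤ f y - f x := by rw [div_le_iff₀ ht0]; nlinarith
  linarith

/-- **Lemma 4 of the paper.** In Euclidean space `ℝⁿ`, line-search
gradient descent iterates satisfy `dist(x_k, Ω) → 0`. -/
theorem gradient_descent_line_search_dist_tendsto_zero
    {n : ℕ}
    (f : EuclideanSpace ℝ (Fin n) → ℝ)
    (f' : EuclideanSpace ℝ (Fin n) → EuclideanSpace ℝ (Fin n))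
    (L : ℝ) (hL : 0 < L)
    (hconv : ConvexOn ℝ Set.univ f)
    (hderiv : ∀ y, HasGradientAt f (f' y) y)
    (hlip : ∀ y z, ‖f' y - f' z‖ ≤ L * ‖y - z‖)
    (Ω : Set (EuclideanSpace ℝ (Fin n))) (hΩ : Ω = {z | ∀ y, f z ≤ f y})
    (hΩne : Ω.Nonempty)
    (γ C₁ C₂ : ℝ) (hγ0 : 0 < γ) (hγ1 : γ ≤ 1)
    (hC₂0 : 0 < C₂) (hC₂L : C₂ ≤ (2 - γ) / L) (hC₁ : C₂ ≤ C₁)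
    (α : ℕ → ℝ) (hα : ∀ k, α k ∈ Set.Icc C₂ C₁)
    (x : ℕ → EuclideanSpace ℝ (Fin n))
    (hx : ∀ k, x (k + 1) = x k - α k • f' (x k))
    (hdec : ∀ k, f (x (k + 1)) ≤ f (x k) - γ * α k / 2 * ‖f' (x k)‖ ^ 2) :
    Filter.Tendsto (fun k : ℕ => Metric.infDist (x k) Ω)
      Filter.atTop (nhds 0) := by
  obtain ⟨xb, hxbΩ⟩ := hΩne
  have hmin : ∀ y, f xb ≤ f y := by rw [hΩ] at hxbΩ; exact hxbΩ
  have hα2 : ∀ k, C₂ ≤ α k := fun k => (hα k).1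
  have hα1 : ∀ k, α k ≤ C₁ := fun k => (hα k).2
  have hαpos : ∀ k, 0 < α k := fun k => lt_of_lt_of_le hC₂0 (hα2 k)
  have hC₁0 : 0 < C₁ := lt_of_lt_of_le hC₂0 hC₁
  -- f decreasing along iterates
  have hfdec : ∀ k, f (x (k+1)) ≤ f (x k) := by
    intro k
    have h1 : 0 ≤ γ * α k / 2 * ‖f' (x k)‖ ^ 2 :=
      mul_nonneg (div_nonneg (mul_nonneg hγ0.le (hαpos k).le) (by norm_num)) (sq_nonneg _)
    linarith [hdec k]
  have hfanti : Antitone (fun k => f (x k)) := antitone_nat_of_succ_le hfdec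
  have hflb : ∀ k, f xb ≤ f (x k) := fun k => hmin (x k)
  -- gradient inequality
  have hgrad : ∀ k (m : EuclideanSpace ℝ (Fin n)),
      f (x k) - f m ≤ ⟪f' (x k), x k - m⟫_ℝ := by
    intro k m
    have h1 := convex_grad_ineq_s8 hconv (hderiv (x k)) m
    have h2 : (m - x k) = -(x k - m) := by abel
    rw [h2, inner_neg_right] at h1
    linarith
  -- per-step inequality
  have step : ∀ (m : EuclideanSpace ℝ (Fin n)), ∀ k, f m ≤ f (x k) →
      ‖x (k+1) - m‖^2 ≤ ‖x k - m‖^2 - 2 * α k * (f (x k) - f m)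
        + (2*C₁/γ) * (f (x k) - f (x (k+1))) := by
    intro m k hfm
    have hexp : ‖x (k+1) - m‖^2 = ‖x k - m‖^2 - 2 * (α k * ⟪f' (x k), x k - m⟫_ℝ)
        + (α k)^2 * ‖f' (x k)‖^2 := by
      rw [hx k]
      have h0 : x k - α k • f' (x k) - m = (x k - m) - α k • f' (x k) := by abel
      rw [h0]
      calc ‖(x k - m) - α k • f' (x k)‖^2
          = ‖x k - m‖^2 - 2 * ⟪x k - m, α k • f' (x k)⟫_ℝ + ‖α k • f' (x k)‖^2 :=
            norm_sub_sq_real _ _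
        _ = ‖x k - m‖^2 - 2 * (α k * ⟪f' (x k), x k - m⟫_ℝ) + (α k)^2 * ‖f' (x k)‖^2 := by
            rw [real_inner_smul_right, real_inner_comm, norm_smul, mul_pow,
              Real.norm_eq_abs, sq_abs]
    have hi := hgrad k m
    have hg2 : (α k)^2 * ‖f' (x k)‖^2 ≤ (2*C₁/γ) * (f (x k) - f (x (k+1))) := by
      have hd := hdec k
      have h3 : γ * α k / 2 * ‖f' (x k)‖^2 ≤ f (x k) - f (x (k+1)) := by linarith
      have h4 : (α k)^2 * ‖f' (x k)‖^2 = (2 * α k / γ) * (γ * α k / 2 * ‖f' (x k)‖^2) := by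
        field_simp
      rw [h4]
      have h5 : 2 * α k / γ ≤ 2 * C₁ / γ := by gcongr; exact hα1 k
      have h7 : 0 ≤ 2 * α k / γ := div_nonneg (by linarith [hαpos k]) hγ0.le
      calc (2 * α k / γ) * (γ * α k / 2 * ‖f' (x k)‖^2)
          ≤ (2 * α k / γ) * (f (x k) - f (x (k+1))) := mul_le_mul_of_nonneg_left h3 h7
        _ ≤ (2*C₁/γ) * (f (x k) - f (x (k+1))) :=
            mul_le_mul_of_nonneg_right h5 (by linarith [hfdec k])
    have h8 : α k * (f (x k) - f m) ≤ α k * ⟪f' (x k), x k - m⟫_ℝ :=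
      mul_le_mul_of_nonneg_left hi (hαpos k).le
    linarith [hexp, hg2, h8]
  have hcpos : (0:ℝ) ≤ 2*C₁/γ := by positivity
  -- the Lyapunov sequence is antitone for any minimizer m
  have hEanti : ∀ m : EuclideanSpace ℝ (Fin n), f m = f xb →
      Antitone (fun k => ‖x k - m‖^2 + (2*C₁/γ) * (f (x k) - f m)) := by
    intro m hm
    apply antitone_nat_of_succ_le
    intro k
    have hfm : f m ≤ f (x k) := hm ▸ hflb k
    have h1 := step m k hfm
    have h2 : 0 ≤ 2 * α k * (f (x k) - f m) := by
      nlinarith [mul_nonneg (hαpos k).le (sub_nonneg.mpr hfm)]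
    linarith
  have hEnonneg : ∀ m : EuclideanSpace ℝ (Fin n), f m = f xb →
      ∀ k, 0 ≤ ‖x k - m‖^2 + (2*C₁/γ) * (f (x k) - f m) := by
    intro m hm k
    have hfm : f m ≤ f (x k) := hm ▸ hflb k
    have := sq_nonneg ‖x k - m‖
    nlinarith
  -- boundedness
  set B := ‖x 0 - xb‖^2 + (2*C₁/γ) * (f (x 0) - f xb) with hBdef
  have hbd : ∀ k, ‖x k - xb‖^2 ≤ B := by
    intro k
    have h1 := hEanti xb rfl (Nat.zero_le k)
    have h2 : 0 ≤ (2*C₁/γ) * (f (x k) - f xb) := mul_nonneg hcpos (by linarith [hflb k])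
    dsimp only at h1
    rw [hBdef]
    linarith
  have hB0 : 0 ≤ B := le_trans (sq_nonneg _) (hbd 0)
  have hbd' : ∀ k, ‖x k - xb‖ ≤ Real.sqrt B := by
    intro k
    nlinarith [Real.sq_sqrt hB0, Real.sqrt_nonneg B, norm_nonneg (x k - xb), hbd k,
      sq_nonneg (‖x k - xb‖ + Real.sqrt B)]
  -- f (x k) converges (to its infimum)
  have hbdbelow : BddBelow (Set.range (fun k => f (x k))) :=
    ⟨f xb, by rintro _ ⟨k, rfl⟩; exact hflb k⟩
  have hflim : Tendsto (fun k => f (x k)) atTop (nhds (⨅ k, f (x k))) :=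
    tendsto_atTop_ciInf hfanti hbdbelow
  have hfdiff0 : Tendsto (fun k => f (x k) - f (x (k+1))) atTop (nhds 0) := by
    have h2 : Tendsto (fun k => f (x (k+1))) atTop (nhds (⨅ k, f (x k))) :=
      hflim.comp (tendsto_add_atTop_nat 1)
    simpa using hflim.sub h2
  -- gradient norms tend to 0
  have hgnorm2 : Tendsto (fun k => ‖f' (x k)‖^2) atTop (nhds 0) := by
    apply squeeze_zero (fun k => sq_nonneg _)
      (g := fun k => (2/(γ*C₂)) * (f (x k) - f (x (k+1))))
    · intro k
      have hd := hdec k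
      have hsq := sq_nonneg ‖f' (x k)‖
      have h3 : γ * C₂ / 2 * ‖f' (x k)‖^2 ≤ f (x k) - f (x (k+1)) := by
        nlinarith [mul_nonneg (mul_nonneg hγ0.le (sub_nonneg.mpr (hα2 k))) hsq]
      have h4 : ‖f' (x k)‖^2 = (2/(γ*C₂)) * (γ * C₂ / 2 * ‖f' (x k)‖^2) := by
        field_simp
      rw [h4]
      exact mul_le_mul_of_nonneg_left h3 (by positivity)
    · simpa using hfdiff0.const_mul (2/(γ*C₂))
  have hgnorm : Tendsto (fun k => ‖f' (x k)‖) atTop (nhds 0) := by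
    have h := hgnorm2.sqrt
    rw [Real.sqrt_zero] at h
    have heq : (fun k => Real.sqrt (‖f' (x k)‖^2)) = fun k => ‖f' (x k)‖ :=
      funext fun k => Real.sqrt_sq (norm_nonneg _)
    rwa [heq] at h
  -- f (x k) → f xb
  have hfto : Tendsto (fun k => f (x k)) atTop (nhds (f xb)) := by
    have hsq : Tendsto (fun k => f (x k) - f xb) atTop (nhds 0) := by
      apply squeeze_zero (fun k => by linarith [hflb k])
        (g := fun k => ‖f' (x k)‖ * Real.sqrt B)
      · intro k
        have h1 := hgrad k xb
        have h2 : ⟪f' (x k), x k - xb⟫_ℝ ≤ ‖f' (x k)‖ * ‖x k - xb‖ := real_inner_le_norm _ _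
        have h3 := hbd' k
        nlinarith [norm_nonneg (f' (x k))]
      · simpa using hgnorm.mul_const (Real.sqrt B)
    have h4 := hsq.add (tendsto_const_nhds (α := ℕ) (x := f xb))
    simpa using h4
  -- extract a convergent subsequence
  have hdiffble : Differentiable ℝ f := fun y => (hderiv y).differentiableAt
  have hcont : Continuous f := hdiffble.continuous
  have hmem : ∀ k, x k ∈ Metric.closedBall (0 : EuclideanSpace ℝ (Fin n)) (‖xb‖ + Real.sqrt B) := by
    intro k
    rw [Metric.mem_closedBall, dist_zero_right]
    have h1 : x k = (x k - xb) + xb := by abel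
    calc ‖x k‖ = ‖(x k - xb) + xb‖ := by rw [← h1]
      _ ≤ ‖x k - xb‖ + ‖xb‖ := norm_add_le _ _
      _ ≤ ‖xb‖ + Real.sqrt B := by linarith [hbd' k]
  obtain ⟨p, -, φ, hφ, hxφ⟩ := tendsto_subseq_of_bounded Metric.isBounded_closedBall hmem
  have hfp : f p = f xb := by
    have h1 : Tendsto (fun j => f (x (φ j))) atTop (nhds (f p)) := (hcont.tendsto p).comp hxφ
    have h2 : Tendsto (fun j => f (x (φ j))) atTop (nhds (f xb)) :=
      hfto.comp hφ.tendsto_atTop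
    exact tendsto_nhds_unique h1 h2
  have hpΩ : p ∈ Ω := by
    rw [hΩ]
    exact fun y => hfp ▸ hmin y
  -- the Lyapunov sequence for p tends to 0
  have hEp : Tendsto (fun k => ‖x k - p‖^2 + (2*C₁/γ) * (f (x k) - f p)) atTop (nhds 0) := by
    have hanti := hEanti p hfp
    have hbb : BddBelow (Set.range (fun k => ‖x k - p‖^2 + (2*C₁/γ) * (f (x k) - f p))) :=
      ⟨0, by rintro _ ⟨k, rfl⟩; exact hEnonneg p hfp k⟩
    have hlim := tendsto_atTop_ciInf hanti hbb
    have hsub := hlim.comp hφ.tendsto_atTop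
    have hsub0 : Tendsto (fun j => ‖x (φ j) - p‖^2 + (2*C₁/γ) * (f (x (φ j)) - f p))
        atTop (nhds 0) := by
      have hn0 : Tendsto (fun j => ‖x (φ j) - p‖) atTop (nhds 0) := by
        rw [tendsto_iff_norm_sub_tendsto_zero] at hxφ
        exact hxφ
      have hn : Tendsto (fun j => ‖x (φ j) - p‖^2) atTop (nhds 0) := by
        have := hn0.mul hn0
        simpa [sq] using this
      have hf2 : Tendsto (fun j => (2*C₁/γ) * (f (x (φ j)) - f p)) atTop (nhds 0) := by
        have h5 : Tendsto (fun j => f (x (φ j))) atTop (nhds (f xb)) :=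
          hfto.comp hφ.tendsto_atTop
        have h6 : Tendsto (fun j => f (x (φ j)) - f p) atTop (nhds 0) := by
          rw [hfp]
          simpa using h5.sub_const (f xb)
        simpa using h6.const_mul (2*C₁/γ)
      simpa using hn.add hf2
    have hz : (⨅ k, ‖x k - p‖^2 + (2*C₁/γ) * (f (x k) - f p)) = 0 :=
      tendsto_nhds_unique hsub hsub0
    rwa [hz] at hlim
  -- conclude
  have hdist0 : Tendsto (fun k => ‖x k - p‖) atTop (nhds 0) := by
    have hsq2 : Tendsto (fun k => ‖x k - p‖^2) atTop (nhds 0) := by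
      apply squeeze_zero (fun k => sq_nonneg _)
        (g := fun k => ‖x k - p‖^2 + (2*C₁/γ) * (f (x k) - f p)) _ hEp
      intro k
      have h2 : 0 ≤ (2*C₁/γ) * (f (x k) - f p) :=
        mul_nonneg hcpos (by rw [hfp]; linarith [hflb k])
      linarith
    have h := hsq2.sqrt
    rw [Real.sqrt_zero] at h
    have heq : (fun k => Real.sqrt (‖x k - p‖^2)) = fun k => ‖x k - p‖ :=
      funext fun k => Real.sqrt_sq (norm_nonneg _)
    rwa [heq] at h
  apply squeeze_zero (fun k => Metric.infDist_nonneg) _ hdist0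
  intro k
  calc Metric.infDist (x k) Ω ≤ dist (x k) p := Metric.infDist_le_dist_of_mem hpΩ
    _ = ‖x k - p‖ := by rw [dist_eq_norm]
end

section
/- Let E be a real inner product space, f : E → ℝ convex and differentiable with L-Lipschitz gradient (L > 0), ψ : E → ℝ convex, F = f + ψ, and let x̄ be a minimizer of F with F* = F(x̄). Fix L̄ ≥ L and a point x ∈ E, let d be the global minimizer over E of d ↦ ⟨∇f(x), d⟩ + (L̄/2)‖d‖² + ψ(x + d), and set x⁺ = x + d. Then ‖x⁺ − x̄‖² − ‖x − x̄‖² ≤ (2/L̄)(F* − F(x⁺)). -/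
open scoped RealInnerProductSpace

lemma curve_hasDerivAt {E : Type*} [NormedAddCommGroup E] [InnerProductSpace ℝ E]
    (f : E → ℝ) (f' : E → E) (hderiv : ∀ y, HasFDerivAt f (innerSL ℝ (f' y)) y)
    (a v : E) (t : ℝ) :
    HasDerivAt (fun s : ℝ => f (a + s • v)) ⟪f' (a + t • v), v⟫ t := by
  have hγ : HasDerivAt (fun s : ℝ => a + s • v) v t := by
    simpa using ((hasDerivAt_id t).smul_const v).const_add a
  exact (hderiv (a + t • v)).comp_hasDerivAt t hγ

/-- gradient inequality for convex differentiable functions -/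
lemma grad_ineq {E : Type*} [NormedAddCommGroup E] [InnerProductSpace ℝ E]
    (f : E → ℝ) (f' : E → E) (hfconv : ConvexOn ℝ Set.univ f)
    (hderiv : ∀ y, HasFDerivAt f (innerSL ℝ (f' y)) y) (a b : E) :
    f a + ⟪f' a, b - a⟫ ≤ f b := by
  set v := b - a with hv
  have hg : ConvexOn ℝ Set.univ (fun s : ℝ => f (a + s • v)) := by
    have := hfconv.comp_affineMap (AffineMap.lineMap a (a + v))
    simp only [Set.preimage_univ] at this
    have e : (f ∘ ⇑(AffineMap.lineMap a (a + v))) = fun s : ℝ => f (a + s • v) := by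
      funext s
      simp [AffineMap.lineMap_apply, Function.comp, add_comm]
    rw [e] at this; exact this
  have hd0 : HasDerivAt (fun s : ℝ => f (a + s • v)) ⟪f' a, v⟫ 0 := by
    simpa using curve_hasDerivAt f f' hderiv a v 0
  have := hg.le_slope_of_hasDerivAt (Set.mem_univ (0:ℝ)) (Set.mem_univ (1:ℝ))
    one_pos hd0
  have h1 := this
  rw [slope_def_field] at h1
  simp only [zero_smul, add_zero, one_smul] at h1
  have : ⟪f' a, v⟫ ≤ f (a + v) - f a := by
    have := h1; field_simp at this; linarith [this]
  have hab : a + v = b := by simp [hv]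
  rw [hab] at this; linarith

/-- descent lemma -/
lemma descent_lemma {E : Type*} [NormedAddCommGroup E] [InnerProductSpace ℝ E]
    (f : E → ℝ) (f' : E → E) (L : ℝ) (hL : 0 < L)
    (hderiv : ∀ y, HasFDerivAt f (innerSL ℝ (f' y)) y)
    (hlip : ∀ y z, ‖f' y - f' z‖ ≤ L * ‖y - z‖) (x d : E) :
    f (x + d) ≤ f x + ⟪f' x, d⟫ + L / 2 * ‖d‖ ^ 2 := by
  set h : ℝ → ℝ := fun t => f (x + t • d) - t * ⟪f' x, d⟫ - L / 2 * t ^ 2 * ‖d‖ ^ 2 with hh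
  have hder : ∀ t : ℝ, HasDerivAt h (⟪f' (x + t • d), d⟫ - ⟪f' x, d⟫ - L * t * ‖d‖ ^ 2) t := by
    intro t
    have h1 := curve_hasDerivAt f f' hderiv x d t
    have h2 : HasDerivAt (fun t : ℝ => t * ⟪f' x, d⟫) ⟪f' x, d⟫ t := by
      simpa using (hasDerivAt_id t).mul_const ⟪f' x, d⟫
    have h3 : HasDerivAt (fun t : ℝ => L / 2 * t ^ 2 * ‖d‖ ^ 2) (L * t * ‖d‖ ^ 2) t := by
      have : HasDerivAt (fun t : ℝ => t ^ 2) (2 * t) t := by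
        simpa using hasDerivAt_pow 2 t
      have := ((this.const_mul (L / 2)).mul_const (‖d‖ ^ 2))
      rw [show L * t * ‖d‖ ^ 2 = L / 2 * (2 * t) * ‖d‖ ^ 2 by ring]; exact this
    exact (h1.sub h2).sub h3
  have hanti : AntitoneOn h (Set.Icc 0 1) := by
    apply antitoneOn_of_deriv_nonpos (convex_Icc 0 1)
    · exact fun t _ => ((hder t).differentiableAt.continuousAt).continuousWithinAt
    · intro t ht
      exact (hder t).differentiableAt.differentiableWithinAt
    · intro t ht
      rw [interior_Icc] at ht
      rw [(hder t).deriv]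
      have hb : ⟪f' (x + t • d) - f' x, d⟫ ≤ ‖f' (x + t • d) - f' x‖ * ‖d‖ :=
        real_inner_le_norm _ _
      have hl : ‖f' (x + t • d) - f' x‖ ≤ L * (t * ‖d‖) := by
        have := hlip (x + t • d) x
        simpa [norm_smul, abs_of_nonneg ht.1.le] using this
      have hd0 : (0:ℝ) ≤ ‖d‖ := norm_nonneg d
      have : ⟪f' (x + t • d), d⟫ - ⟪f' x, d⟫ ≤ L * t * ‖d‖ ^ 2 := by
        rw [← inner_sub_left]
        calc ⟪f' (x + t • d) - f' x, d⟫ ≤ ‖f' (x + t • d) - f' x‖ * ‖d‖ := hb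
        _ ≤ L * (t * ‖d‖) * ‖d‖ := by nlinarith
        _ = L * t * ‖d‖ ^ 2 := by ring
      linarith
  have h10 := hanti (Set.left_mem_Icc.mpr zero_le_one) (Set.right_mem_Icc.mpr zero_le_one)
    zero_le_one
  simp only [hh, one_smul, zero_smul, add_zero, one_pow, one_mul, mul_one, zero_pow,
    mul_zero, zero_mul, sub_zero] at h10
  linarith

/-- A single proximal gradient step with parameter `L̄ ≥ L`
satisfies `‖x⁺ − x̄‖² − ‖x − x̄‖² ≤ (2/L̄)(F* − F(x⁺))` for any minimizer `x̄` of
`F = f + ψ`. -/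
theorem proximal_gradient_one_step_bound
    {E : Type*} [NormedAddCommGroup E] [InnerProductSpace ℝ E]
    (f : E → ℝ) (f' : E → E) (ψ : E → ℝ) (L : ℝ) (hL : 0 < L)
    (hfconv : ConvexOn ℝ Set.univ f)
    (hderiv : ∀ y, HasFDerivAt f (innerSL ℝ (f' y)) y)
    (hlip : ∀ y z, ‖f' y - f' z‖ ≤ L * ‖y - z‖)
    (hψconv : ConvexOn ℝ Set.univ ψ)
    (F : E → ℝ) (hF : ∀ y, F y = f y + ψ y)
    (xbar : E) (hxbar : ∀ y, F xbar ≤ F y)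
    (Lbar : ℝ) (hLbar : L ≤ Lbar)
    (x d : E)
    (hd : ∀ z : E,
      ⟪f' x, d⟫ + Lbar / 2 * ‖d‖ ^ 2 + ψ (x + d) ≤
        ⟪f' x, z⟫ + Lbar / 2 * ‖z‖ ^ 2 + ψ (x + z)) :
    ‖x + d - xbar‖ ^ 2 - ‖x - xbar‖ ^ 2 ≤ 2 / Lbar * (F xbar - F (x + d)) := by

  have hLbar0 : 0 < Lbar := lt_of_lt_of_le hL hLbar
  set z : E := xbar - x with hz
  set φ : E → ℝ := fun w => ⟪f' x, w⟫ + Lbar / 2 * ‖w‖ ^ 2 + ψ (x + w) with hφ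
  set A : ℝ := ‖z - d‖ ^ 2 with hA
  have hA0 : 0 ≤ A := by positivity
  -- strong convexity bound at the minimizer
  have key : ∀ t ∈ Set.Ioo (0:ℝ) 1, Lbar / 2 * (1 - t) * A ≤ φ z - φ d := by
    intro t ht
    obtain ⟨ht0, ht1⟩ := ht
    set w : E := (1 - t) • d + t • z with hw
    have hdw := hd w
    have e1 : ‖w‖ ^ 2 = (1 - t) ^ 2 * ‖d‖ ^ 2 + 2 * ((1 - t) * t * ⟪d, z⟫) + t ^ 2 * ‖z‖ ^ 2 := by
      rw [hw, norm_add_sq_real]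
      rw [norm_smul, norm_smul, real_inner_smul_left, real_inner_smul_right]
      rw [Real.norm_eq_abs, Real.norm_eq_abs, abs_of_nonneg (by linarith), abs_of_nonneg ht0.le]
      ring
    have e2 : A = ‖z‖ ^ 2 - 2 * ⟪d, z⟫ + ‖d‖ ^ 2 := by
      rw [hA, norm_sub_sq_real, real_inner_comm]
    have einner : ⟪f' x, w⟫ = (1 - t) * ⟪f' x, d⟫ + t * ⟪f' x, z⟫ := by
      rw [hw, inner_add_right, real_inner_smul_right, real_inner_smul_right]
    have eψ : ψ (x + w) ≤ (1 - t) * ψ (x + d) + t * ψ (x + z) := by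
      have hcomb : x + w = (1 - t) • (x + d) + t • (x + z) := by
        rw [hw]; module
      rw [hcomb]
      exact hψconv.2 (Set.mem_univ _) (Set.mem_univ _) (by linarith) ht0.le (by ring)
    have hstep : φ d ≤ (1 - t) * φ d + t * φ z - Lbar / 2 * (t * (1 - t)) * A := by
      have : φ d ≤ φ w := hdw
      rw [hφ] at this ⊢
      simp only at this ⊢
      rw [einner, e1] at this
      rw [e2]
      linarith [eψ, this]
    have h' : t * (Lbar / 2 * (1 - t) * A) ≤ t * (φ z - φ d) := by linarith [hstep]
    exact le_of_mul_le_mul_left h' ht0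
  have hstrong : Lbar / 2 * A ≤ φ z - φ d := by
    have htends : Filter.Tendsto (fun t : ℝ => Lbar / 2 * (1 - t) * A) (nhdsWithin 0 (Set.Ioi 0))
        (nhds (Lbar / 2 * A)) := by
      have : Filter.Tendsto (fun t : ℝ => Lbar / 2 * (1 - t) * A) (nhds 0)
          (nhds (Lbar / 2 * (1 - 0) * A)) := by
        apply Continuous.tendsto
        continuity
      simpa using this.mono_left nhdsWithin_le_nhds
    refine le_of_tendsto htends ?_
    filter_upwards [Ioo_mem_nhdsGT_of_mem (by norm_num : (0:ℝ) ∈ Set.Ico (0:ℝ) 1)] with t ht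
    exact key t ht
  -- descent lemma
  have hdesc : f (x + d) ≤ f x + ⟪f' x, d⟫ + Lbar / 2 * ‖d‖ ^ 2 := by
    have := descent_lemma f f' L hL hderiv hlip x d
    nlinarith [sq_nonneg ‖d‖]
  -- gradient inequality
  have hgrad : f x + ⟪f' x, z⟫ ≤ f xbar := by
    have := grad_ineq f f' hfconv hderiv x xbar
    simpa [hz] using this
  have hxz : x + z = xbar := by rw [hz]; abel
  have hnorm1 : ‖z - d‖ = ‖x + d - xbar‖ := by
    rw [show z - d = -(x + d - xbar) by rw [hz]; abel, norm_neg]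
  have hnorm2 : ‖z‖ = ‖x - xbar‖ := by rw [hz, norm_sub_rev]
  have hmain : F (x + d) ≤ F xbar + Lbar / 2 * (‖x - xbar‖ ^ 2 - ‖x + d - xbar‖ ^ 2) := by
    have h1 : F (x + d) ≤ f x + φ d := by
      rw [hF, hφ]; simp only; linarith [hdesc]
    have h2 : f x + φ z ≤ F xbar + Lbar / 2 * ‖x - xbar‖ ^ 2 := by
      rw [hφ, hF]; simp only
      rw [hxz, hnorm2]
      linarith [hgrad]
    have h3 := hstrong
    rw [hA, hnorm1] at h3
    simp only [hφ] at h1 h2 h3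
    linarith
  rw [div_mul_eq_mul_div, le_div_iff₀ hLbar0]
  linarith [hmain]
end
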